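/- Let x ~ N(0,1) and y ~ χ²_s be independent, and let ε ∈ (0,1]. Then P(x²/y ≥ ε²) ≤ (1−2λ)^{−1/2} (1+2λε²)^{−s/2} for every λ ∈ (0,1/2); in particular, taking λ = 1/4, P(x²/y ≥ ε²) ≤ √2 · 2^{−sε²/4}. -/

import Mathlib

open MeasureTheory ProbabilityTheory Real Set
open scoped ENNReal NNReal

lemma my_integral_withDensity_ofReal {p : ℝ → ℝ} (hp : Measurable p) (hp0 : ∀ x, 0 ≤ p x)
    (g : ℝ → ℝ) :
    ∫ t, g t ∂(volume.withDensity (fun t => ENNReal.ofReal (p t))) = ∫ t, p t * g t := by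
  rw [show (fun t => ENNReal.ofReal (p t)) = (fun t => ((p t).toNNReal : ℝ≥0∞)) from rfl,
    integral_withDensity_eq_integral_smul hp.real_toNNReal g]
  congr 1; ext t
  rw [NNReal.smul_def, Real.coe_toNNReal _ (hp0 t), smul_eq_mul]

lemma my_integrable_withDensity_ofReal {p : ℝ → ℝ} (hp : Measurable p) (hp0 : ∀ x, 0 ≤ p x)
    {g : ℝ → ℝ} :
    Integrable g (volume.withDensity (fun t => ENNReal.ofReal (p t))) ↔
      Integrable (fun t => p t * g t) := by
  rw [integrable_withDensity_iff hp.ennreal_ofReal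
    (Filter.Eventually.of_forall fun t => ENNReal.ofReal_lt_top)]
  refine integrable_congr (Filter.Eventually.of_forall fun t => ?_)
  show g t * (ENNReal.ofReal (p t)).toReal = p t * g t
  rw [ENNReal.toReal_ofReal (hp0 t), mul_comm]

lemma my_gauss_aux {l : ℝ} (hl : l < 1/2) :
    Integrable (fun t => rexp (l * t ^ 2)) (gaussianReal 0 1) ∧
    ∫ t, rexp (l * t ^ 2) ∂(gaussianReal 0 1) = (1 - 2 * l) ^ (-(1:ℝ)/2) := by
  have hb : 0 < 1/2 - l := by linarith
  have hpdf : ∀ t : ℝ, gaussianPDFReal 0 1 t * rexp (l * t ^ 2)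
      = (Real.sqrt (2 * π))⁻¹ * rexp (-(1/2 - l) * t ^ 2) := by
    intro t
    simp only [gaussianPDFReal, NNReal.coe_one, mul_one, sub_zero]
    rw [mul_assoc, ← Real.exp_add]
    congr 2
    ring_nf
  have hmeas := measurable_gaussianPDFReal 0 1
  have hnn := gaussianPDFReal_nonneg 0 1
  rw [gaussianReal_of_var_ne_zero 0 one_ne_zero, gaussianPDF_def]
  constructor
  · rw [my_integrable_withDensity_ofReal hmeas hnn]
    have h := (integrable_exp_neg_mul_sq hb).const_mul (Real.sqrt (2 * π))⁻¹
    exact h.congr (Filter.Eventually.of_forall fun t => (hpdf t).symm)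
  · rw [my_integral_withDensity_ofReal hmeas hnn]
    simp only [hpdf]
    rw [integral_const_mul, integral_gaussian]
    rw [show (-(1:ℝ)/2) = -(1/2) by ring, Real.rpow_neg (by linarith), ← Real.sqrt_eq_rpow]
    rw [← Real.sqrt_inv, ← Real.sqrt_inv, ← Real.sqrt_mul (by positivity)]
    congr 1
    have hπ := Real.pi_pos
    have hπ' : π ≠ 0 := Real.pi_ne_zero
    have h2l : (1:ℝ) - 2*l ≠ 0 := by linarith
    field_simp

lemma my_gamma_aux {a r c : ℝ} (ha : 0 < a) (hr : 0 < r) (hc : 0 < c) :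
    Integrable (fun t => rexp (-(c * t))) (gammaMeasure a r) ∧
    ∫ t, rexp (-(c * t)) ∂(gammaMeasure a r) = (r / (r + c)) ^ a := by
  have hrc : 0 < r + c := by linarith
  have hΓ : Real.Gamma a ≠ 0 := (Real.Gamma_pos_of_pos ha).ne'
  set F : ℝ → ℝ := fun t => gammaPDFReal a r t * rexp (-(c * t)) with hF
  have hIoi : ∀ t ∈ Ioi (0:ℝ), F t
      = (r ^ a / Real.Gamma a) * (t ^ (a - 1) * rexp (-((r + c) * t))) := by
    intro t ht
    simp only [F, gammaPDFReal, if_pos (le_of_lt (Set.mem_Ioi.mp ht))]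
    rw [mul_assoc (r ^ a / Real.Gamma a), mul_assoc, mul_assoc, ← Real.exp_add]
    congr 2
    ring_nf
  have hInt : IntegrableOn (fun t => t ^ (a - 1) * rexp (-((r + c) * t))) (Ioi 0) := by
    have h := integrableOn_rpow_mul_exp_neg_mul_rpow (s := a - 1) (p := 1) (b := r + c)
      (by linarith) zero_lt_one hrc
    refine IntegrableOn.congr_fun h (fun t ht => ?_) measurableSet_Ioi
    rw [Real.rpow_one]
    ring_nf
  have hzero : ∀ t : ℝ, t ∉ Ici (0:ℝ) → F t = 0 := by
    intro t ht
    have h0 : ¬ (0 ≤ t) := fun h => ht h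
    simp only [F, gammaPDFReal, if_neg h0, zero_mul]
  have hF_int : Integrable F := by
    have h1 : IntegrableOn F (Iio 0) := by
      refine (integrableOn_congr_fun (fun t ht => ?_) measurableSet_Iio).mpr
        (integrableOn_zero)
      exact hzero t (by simpa using ht)
    have h2 : IntegrableOn F (Ici 0) := by
      rw [integrableOn_Ici_iff_integrableOn_Ioi]
      exact IntegrableOn.congr_fun (hInt.const_mul (r ^ a / Real.Gamma a))
        (fun t ht => (hIoi t ht).symm) measurableSet_Ioi
    have h := h1.union h2
    rwa [Iio_union_Ici, integrableOn_univ] at h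
  have hpdf_meas := measurable_gammaPDFReal a r
  have hpdf_nn := gammaPDFReal_nonneg ha hr
  constructor
  · show Integrable _ (volume.withDensity (gammaPDF a r))
    rw [show gammaPDF a r = fun t => ENNReal.ofReal (gammaPDFReal a r t) from rfl,
      my_integrable_withDensity_ofReal hpdf_meas hpdf_nn]
    exact hF_int
  · show (∫ t, rexp (-(c * t)) ∂(volume.withDensity (gammaPDF a r))) = _
    rw [show gammaPDF a r = fun t => ENNReal.ofReal (gammaPDFReal a r t) from rfl,
      my_integral_withDensity_ofReal hpdf_meas hpdf_nn]
    rw [← setIntegral_eq_integral_of_forall_compl_eq_zero hzero,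
      integral_Ici_eq_integral_Ioi, setIntegral_congr_fun measurableSet_Ioi hIoi,
      integral_const_mul, integral_rpow_mul_exp_neg_mul_Ioi ha hrc]
    rw [show r ^ a / Real.Gamma a * ((1 / (r + c)) ^ a * Real.Gamma a)
        = (r ^ a * (1 / (r + c)) ^ a) * (Real.Gamma a / Real.Gamma a) from by ring,
      div_self hΓ, mul_one, ← Real.mul_rpow hr.le (by positivity), mul_one_div]

lemma my_log_ineq {u : ℝ} (h0 : 0 ≤ u) (h1 : u ≤ 1) : u * Real.log 2 ≤ Real.log (1 + u) := by
  rw [Real.le_log_iff_exp_le (by linarith)]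
  have hc := convexOn_exp.2 (Set.mem_univ (0:ℝ)) (Set.mem_univ (Real.log 2))
    (by linarith : (0:ℝ) ≤ 1 - u) h0 (by ring)
  simp only [smul_eq_mul, mul_zero, zero_add, Real.exp_zero, Real.exp_log two_pos] at hc
  calc rexp (u * Real.log 2) ≤ (1 - u) * 1 + u * 2 := hc
    _ = 1 + u := by ring

theorem gaussian_chiSq_ratio_tail_bound
    {Ω : Type*} [MeasureSpace Ω] [IsProbabilityMeasure (ℙ : Measure Ω)]
    (s : ℕ) (hs : 0 < s)
    (x y : Ω → ℝ) (hx : Measurable x) (hy : Measurable y)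
    (hxdist : Measure.map x ℙ = gaussianReal 0 1)
    (hydist : Measure.map y ℙ = gammaMeasure ((s : ℝ) / 2) (1 / 2))
    (hindep : IndepFun x y ℙ)
    (ε : ℝ) (hε : ε ∈ Set.Ioc (0:ℝ) 1) :
    (∀ l ∈ Set.Ioo (0:ℝ) (1/2),
      ℙ {ω | ε ^ 2 * y ω ≤ x ω ^ 2} ≤
        ENNReal.ofReal ((1 - 2 * l) ^ (-(1:ℝ)/2) * (1 + 2 * l * ε ^ 2) ^ (-(s:ℝ)/2))) ∧
    ℙ {ω | ε ^ 2 * y ω ≤ x ω ^ 2} ≤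
      ENNReal.ofReal (Real.sqrt 2 * (2 : ℝ) ^ (-(s:ℝ) * ε ^ 2 / 4)) := by
  obtain ⟨hε0, hε1⟩ := hε
  have hs2 : 0 < (s:ℝ)/2 := by positivity
  have key : ∀ l ∈ Set.Ioo (0:ℝ) (1/2),
      ℙ {ω | ε ^ 2 * y ω ≤ x ω ^ 2} ≤
        ENNReal.ofReal ((1 - 2 * l) ^ (-(1:ℝ)/2) * (1 + 2 * l * ε ^ 2) ^ (-(s:ℝ)/2)) := by
    rintro l ⟨hl0, hl2⟩
    have hc : 0 < l * ε ^ 2 := by positivity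
    have hgm : Measurable fun t : ℝ => rexp (l * t ^ 2) :=
      (Real.measurable_exp.comp ((measurable_id.pow_const 2).const_mul l))
    have hgm2 : Measurable fun t : ℝ => rexp (-(l * ε ^ 2 * t)) :=
      (Real.measurable_exp.comp (measurable_id.const_mul (l * ε ^ 2)).neg)
    have hIf : Integrable (fun ω => rexp (l * x ω ^ 2)) ℙ := by
      have h := (my_gauss_aux hl2).1
      rw [← hxdist] at h
      exact (integrable_map_measure hgm.aestronglyMeasurable hx.aemeasurable).mp h
    have hIg : Integrable (fun ω => rexp (-(l * ε ^ 2 * y ω))) ℙ := by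
      have h := (my_gamma_aux hs2 (by norm_num : (0:ℝ) < 1/2) hc).1
      rw [← hydist] at h
      exact (integrable_map_measure hgm2.aestronglyMeasurable hy.aemeasurable).mp h
    have hindep' : IndepFun (fun ω => rexp (l * x ω ^ 2))
        (fun ω => rexp (-(l * ε ^ 2 * y ω))) ℙ := hindep.comp hgm hgm2
    have hprod : ∀ ω : Ω, rexp (l * x ω ^ 2) * rexp (-(l * ε ^ 2 * y ω))
        = rexp (l * (x ω ^ 2 - ε ^ 2 * y ω)) := by
      intro ω; rw [← Real.exp_add]; congr 1; ring
    have hXint : Integrable (fun ω => rexp (l * (x ω ^ 2 - ε ^ 2 * y ω))) ℙ :=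
      (hindep'.integrable_mul hIf hIg).congr (Filter.Eventually.of_forall fun ω => hprod ω)
    have hmark := measure_ge_le_exp_mul_mgf (μ := ℙ)
      (X := fun ω => x ω ^ 2 - ε ^ 2 * y ω) 0 hl0.le hXint
    have hset : {ω | ε ^ 2 * y ω ≤ x ω ^ 2} = {ω | (0:ℝ) ≤ x ω ^ 2 - ε ^ 2 * y ω} := by
      ext ω; simp [sub_nonneg]
    have hmgf : mgf (fun ω => x ω ^ 2 - ε ^ 2 * y ω) ℙ l
        = (1 - 2 * l) ^ (-(1:ℝ)/2) * (1 + 2 * l * ε ^ 2) ^ (-(s:ℝ)/2) := by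
      have e1 : ∫ ω, rexp (l * x ω ^ 2) ∂ℙ = (1 - 2 * l) ^ (-(1:ℝ)/2) := by
        rw [← (my_gauss_aux hl2).2, ← hxdist,
          integral_map hx.aemeasurable hgm.aestronglyMeasurable]
      have e2 : ∫ ω, rexp (-(l * ε ^ 2 * y ω)) ∂ℙ = (1 + 2 * l * ε ^ 2) ^ (-(s:ℝ)/2) := by
        have hval := (my_gamma_aux hs2 (by norm_num : (0:ℝ) < 1/2) hc).2
        rw [← hydist, integral_map hy.aemeasurable hgm2.aestronglyMeasurable] at hval
        rw [hval, show ((1:ℝ)/2) / (1/2 + l * ε ^ 2) = (1 + 2 * l * ε ^ 2)⁻¹ from by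
            field_simp,
          Real.inv_rpow (by positivity : (0:ℝ) ≤ 1 + 2 * l * ε ^ 2),
          ← Real.rpow_neg (by positivity : (0:ℝ) ≤ 1 + 2 * l * ε ^ 2)]
        congr 1
        ring
      rw [mgf]
      calc ∫ ω, rexp (l * (x ω ^ 2 - ε ^ 2 * y ω)) ∂ℙ
          = ∫ ω, ((fun ω => rexp (l * x ω ^ 2)) * (fun ω => rexp (-(l * ε ^ 2 * y ω)))) ω ∂ℙ := by
            refine integral_congr_ae (Filter.Eventually.of_forall fun ω => ?_)
            exact (hprod ω).symm
        _ = (∫ ω, rexp (l * x ω ^ 2) ∂ℙ) * ∫ ω, rexp (-(l * ε ^ 2 * y ω)) ∂ℙ :=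
            hindep'.integral_mul_eq_mul_integral hIf.aestronglyMeasurable hIg.aestronglyMeasurable
        _ = _ := by rw [e1, e2]
    calc ℙ {ω | ε ^ 2 * y ω ≤ x ω ^ 2}
        = ENNReal.ofReal ((ℙ {ω | ε ^ 2 * y ω ≤ x ω ^ 2}).toReal) :=
          (ENNReal.ofReal_toReal (measure_ne_top _ _)).symm
      _ ≤ ENNReal.ofReal (rexp (-l * 0) * mgf (fun ω => x ω ^ 2 - ε ^ 2 * y ω) ℙ l) := by
          apply ENNReal.ofReal_le_ofReal
          rw [hset]
          exact hmark
      _ = _ := by rw [hmgf, mul_zero, Real.exp_zero, one_mul]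
  refine ⟨key, ?_⟩
  have h14 := key (1/4) ⟨by norm_num, by norm_num⟩
  refine h14.trans (ENNReal.ofReal_le_ofReal ?_)
  have h1 : ((1:ℝ) - 2 * (1/4)) ^ (-(1:ℝ)/2) = Real.sqrt 2 := by
    rw [show ((1:ℝ) - 2 * (1/4)) = 2⁻¹ from by norm_num,
      show (-(1:ℝ)/2) = -(1/2) from by ring, Real.rpow_neg (by norm_num : (0:ℝ) ≤ 2⁻¹),
      ← Real.sqrt_eq_rpow, Real.sqrt_inv, inv_inv]
  have hε2 : ε ^ 2 ≤ 1 := pow_le_one₀ hε0.le hε1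
  have hu0 : (0:ℝ) ≤ ε ^ 2 / 2 := by positivity
  have hu1 : ε ^ 2 / 2 ≤ 1 := by linarith
  have hlog := my_log_ineq hu0 hu1
  have h2 : (1 + 2 * (1/4 : ℝ) * ε ^ 2) ^ (-(s:ℝ)/2) ≤ (2:ℝ) ^ (-(s:ℝ) * ε ^ 2 / 4) := by
    rw [Real.rpow_def_of_pos (by positivity), Real.rpow_def_of_pos (by norm_num)]
    apply Real.exp_le_exp.mpr
    have hsnn : (0:ℝ) ≤ (s:ℝ) / 2 := by positivity
    have h := mul_le_mul_of_nonneg_left hlog hsnn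
    rw [show (1 + 2 * (1/4 : ℝ) * ε ^ 2) = 1 + ε ^ 2 / 2 from by ring]
    nlinarith [h]
  rw [h1]
  exact mul_le_mul_of_nonneg_left h2 (Real.sqrt_nonneg 2)
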